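/- arXiv:1901.10381 — 3 statements merged into one kernel-verified Lean document; each statement's English description precedes it below -/
import Mathlib

section
/- The Peregrine breather B = B_P satisfies, for all (t,x) ∈ ℝ², the fourth-order elliptic equation B_{xxxx} + 3 B_x² B̄ + (4|B|² − 3) B_{xx} + B² B̄_{xx} + 2|B_x|² B + (3/2)(|B|² − 1)² B = 0, where derivatives are with respect to x. -/
open Complex

/-- The Peregrine breather `B_P(t,x) = e^{it}(1 - 4(1+2it)/(1+4t²+2x²))`. -/
noncomputable def BP (t x : ℝ) : ℂ :=
  Complex.exp (Complex.I * (t : ℂ)) *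
    (1 - 4 * (1 + 2 * Complex.I * (t : ℂ)) / (1 + 4 * (t : ℂ) ^ 2 + 2 * (x : ℂ) ^ 2))

namespace Stmt2Aux

noncomputable def Ee (t : ℝ) : ℂ := Complex.exp (Complex.I * (t : ℂ))
noncomputable def cc (t : ℝ) : ℂ := 4 * (1 + 2 * Complex.I * (t : ℂ))
noncomputable def dd (t : ℝ) : ℂ := 4 * (1 - 2 * Complex.I * (t : ℂ))
noncomputable def kk (t : ℝ) : ℂ := 1 + 4 * (t : ℂ) ^ 2

noncomputable def G0 (t : ℝ) (z : ℂ) : ℂ := Ee t * (1 - cc t / (kk t + 2 * z ^ 2))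
noncomputable def G1 (t : ℝ) (z : ℂ) : ℂ := Ee t * (4 * cc t * z / (kk t + 2 * z ^ 2) ^ 2)
noncomputable def G2 (t : ℝ) (z : ℂ) : ℂ :=
  Ee t * ((4 * cc t * kk t - 24 * cc t * z ^ 2) / (kk t + 2 * z ^ 2) ^ 3)
noncomputable def G3 (t : ℝ) (z : ℂ) : ℂ :=
  Ee t * ((-96 * cc t * kk t * z + 192 * cc t * z ^ 3) / (kk t + 2 * z ^ 2) ^ 4)
noncomputable def G4 (t : ℝ) (z : ℂ) : ℂ :=
  Ee t * ((-96 * cc t * kk t ^ 2 + 1920 * cc t * kk t * z ^ 2 - 1920 * cc t * z ^ 4)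
      / (kk t + 2 * z ^ 2) ^ 5)

lemma den_eq (t x : ℝ) : kk t + 2 * (x : ℂ) ^ 2 = ((1 + 4 * t ^ 2 + 2 * x ^ 2 : ℝ) : ℂ) := by
  unfold kk; push_cast; ring

lemma den_ne (t x : ℝ) : kk t + 2 * (x : ℂ) ^ 2 ≠ 0 := by
  rw [den_eq]
  exact_mod_cast (by positivity : (1 + 4 * t ^ 2 + 2 * x ^ 2 : ℝ) ≠ 0)

lemma Ee_ne (t : ℝ) : Ee t ≠ 0 := Complex.exp_ne_zero _

lemma BP_eq (t x : ℝ) : BP t x = G0 t (x : ℂ) := rfl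

lemma hden (t : ℝ) (z : ℂ) : HasDerivAt (fun z : ℂ => kk t + 2 * z ^ 2) (4 * z) z := by
  have h := ((hasDerivAt_pow 2 z).const_mul (2 : ℂ)).const_add (kk t)
  exact h.congr_deriv (by push_cast; ring)

lemma hG0 (t x : ℝ) : HasDerivAt (fun y : ℝ => BP t y) (G1 t (x : ℂ)) x := by
  have hD := den_ne t x
  have h := (((hasDerivAt_const ((x : ℂ)) (cc t)).div (hden t (x : ℂ)) hD).const_sub
      (1 : ℂ)).const_mul (Ee t)
  have h2 : HasDerivAt (fun z : ℂ => G0 t z) (G1 t (x : ℂ)) (x : ℂ) := by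
    refine h.congr_deriv ?_
    unfold G1
    rw [mul_eq_mul_left_iff]
    left
    field_simp
    ring
  exact h2.comp_ofReal

lemma hG1 (t x : ℝ) : HasDerivAt (fun y : ℝ => G1 t (y : ℂ)) (G2 t (x : ℂ)) x := by
  have hD := den_ne t x
  have hnum : HasDerivAt (fun z : ℂ => 4 * cc t * z) (4 * cc t) (x : ℂ) := by
    simpa using (hasDerivAt_id ((x : ℂ))).const_mul (4 * cc t)
  have h := (hnum.div ((hden t (x : ℂ)).pow 2) (pow_ne_zero 2 hD)).const_mul (Ee t)
  have h2 : HasDerivAt (fun z : ℂ => G1 t z) (G2 t (x : ℂ)) (x : ℂ) := by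
    refine h.congr_deriv ?_
    unfold G2
    simp only [Pi.pow_apply]
    rw [mul_eq_mul_left_iff]
    left
    field_simp
    ring
  exact h2.comp_ofReal

lemma hG2 (t x : ℝ) : HasDerivAt (fun y : ℝ => G2 t (y : ℂ)) (G3 t (x : ℂ)) x := by
  have hD := den_ne t x
  have hnum : HasDerivAt (fun z : ℂ => 4 * cc t * kk t - 24 * cc t * z ^ 2)
      (-48 * cc t * (x : ℂ)) (x : ℂ) := by
    have h := ((hasDerivAt_pow 2 ((x : ℂ))).const_mul (24 * cc t)).const_sub (4 * cc t * kk t)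
    exact h.congr_deriv (by push_cast; ring)
  have h := (hnum.div ((hden t (x : ℂ)).pow 3) (pow_ne_zero 3 hD)).const_mul (Ee t)
  have h2 : HasDerivAt (fun z : ℂ => G2 t z) (G3 t (x : ℂ)) (x : ℂ) := by
    refine h.congr_deriv ?_
    unfold G3
    simp only [Pi.pow_apply, show (3 - 1 : ℕ) = 2 from rfl, Nat.cast_ofNat]
    rw [mul_eq_mul_left_iff]
    left
    field_simp
    ring
  exact h2.comp_ofReal

lemma hG3 (t x : ℝ) : HasDerivAt (fun y : ℝ => G3 t (y : ℂ)) (G4 t (x : ℂ)) x := by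
  have hD := den_ne t x
  have hnum : HasDerivAt (fun z : ℂ => -96 * cc t * kk t * z + 192 * cc t * z ^ 3)
      (-96 * cc t * kk t + 576 * cc t * (x : ℂ) ^ 2) (x : ℂ) := by
    have h := ((hasDerivAt_id ((x : ℂ))).const_mul (-96 * cc t * kk t)).add
      ((hasDerivAt_pow 3 ((x : ℂ))).const_mul (192 * cc t))
    exact h.congr_deriv (by push_cast; ring)
  have h := (hnum.div ((hden t (x : ℂ)).pow 4) (pow_ne_zero 4 hD)).const_mul (Ee t)
  have h2 : HasDerivAt (fun z : ℂ => G3 t z) (G4 t (x : ℂ)) (x : ℂ) := by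
    refine h.congr_deriv ?_
    unfold G4
    simp only [Pi.pow_apply, show (4 - 1 : ℕ) = 3 from rfl, Nat.cast_ofNat]
    rw [mul_eq_mul_left_iff]
    left
    field_simp
    ring
  exact h2.comp_ofReal

lemma iter_one (t : ℝ) : iteratedDeriv 1 (fun y : ℝ => BP t y) = fun x : ℝ => G1 t (x : ℂ) := by
  rw [iteratedDeriv_one]
  exact funext fun x => (hG0 t x).deriv

lemma iter_two (t : ℝ) : iteratedDeriv 2 (fun y : ℝ => BP t y) = fun x : ℝ => G2 t (x : ℂ) := by
  rw [show (2 : ℕ) = 1 + 1 from rfl, iteratedDeriv_succ, iter_one]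
  exact funext fun x => (hG1 t x).deriv

lemma iter_three (t : ℝ) : iteratedDeriv 3 (fun y : ℝ => BP t y) = fun x : ℝ => G3 t (x : ℂ) := by
  rw [show (3 : ℕ) = 2 + 1 from rfl, iteratedDeriv_succ, iter_two]
  exact funext fun x => (hG2 t x).deriv

lemma iter_four (t : ℝ) : iteratedDeriv 4 (fun y : ℝ => BP t y) = fun x : ℝ => G4 t (x : ℂ) := by
  rw [show (4 : ℕ) = 3 + 1 from rfl, iteratedDeriv_succ, iter_three]
  exact funext fun x => (hG3 t x).deriv

lemma conj_Ee (t : ℝ) : (starRingEnd ℂ) (Ee t) = (Ee t)⁻¹ := by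
  unfold Ee
  rw [← Complex.exp_conj, ← Complex.exp_neg]
  congr 1
  simp [Complex.conj_ofReal]

lemma conj_cc (t : ℝ) : (starRingEnd ℂ) (cc t) = dd t := by
  unfold cc dd
  simp [map_ofNat, Complex.conj_ofReal]
  ring

lemma conj_kk (t : ℝ) : (starRingEnd ℂ) (kk t) = kk t := by
  unfold kk
  simp [map_ofNat, Complex.conj_ofReal]

lemma conj_den (t x : ℝ) :
    (starRingEnd ℂ) (kk t + 2 * (x : ℂ) ^ 2) = kk t + 2 * (x : ℂ) ^ 2 := by
  rw [den_eq]; exact Complex.conj_ofReal _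

lemma conj_G0 (t x : ℝ) :
    (starRingEnd ℂ) (G0 t (x : ℂ))
      = (Ee t)⁻¹ * (1 - dd t / (kk t + 2 * (x : ℂ) ^ 2)) := by
  unfold G0
  rw [map_mul, conj_Ee, map_sub, map_one, map_div₀, conj_cc, conj_den]

lemma conj_G1 (t x : ℝ) :
    (starRingEnd ℂ) (G1 t (x : ℂ))
      = (Ee t)⁻¹ * (4 * dd t * (x : ℂ) / (kk t + 2 * (x : ℂ) ^ 2) ^ 2) := by
  unfold G1
  rw [map_mul, conj_Ee, map_div₀, map_pow, conj_den, map_mul, map_mul, conj_cc,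
    map_ofNat, Complex.conj_ofReal]

lemma conj_G2 (t x : ℝ) :
    (starRingEnd ℂ) (G2 t (x : ℂ))
      = (Ee t)⁻¹ * ((4 * dd t * kk t - 24 * dd t * (x : ℂ) ^ 2)
          / (kk t + 2 * (x : ℂ) ^ 2) ^ 3) := by
  unfold G2
  rw [map_mul, conj_Ee, map_div₀, map_pow, conj_den, map_sub, map_mul, map_mul, map_mul,
    map_mul, conj_cc, conj_kk, map_pow, map_ofNat, map_ofNat, Complex.conj_ofReal]

set_option maxHeartbeats 1000000 in
lemma key (Ev w X K D : ℂ) (hE : Ev ≠ 0) (hD : D ≠ 0) (hK : K = 1 - w ^ 2)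
    (hDdef : D = K + 2 * X ^ 2) :
    Ev * ((-96 * (4 * (1 + w)) * K ^ 2 + 1920 * (4 * (1 + w)) * K * X ^ 2
          - 1920 * (4 * (1 + w)) * X ^ 4) / D ^ 5)
      + 3 * (Ev * (4 * (4 * (1 + w)) * X / D ^ 2)) ^ 2 * (Ev⁻¹ * (1 - 4 * (1 - w) / D))
      + (4 * (Ev * (1 - 4 * (1 + w) / D) * (Ev⁻¹ * (1 - 4 * (1 - w) / D))) - 3)
          * (Ev * ((4 * (4 * (1 + w)) * K - 24 * (4 * (1 + w)) * X ^ 2) / D ^ 3))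
      + (Ev * (1 - 4 * (1 + w) / D)) ^ 2
          * (Ev⁻¹ * ((4 * (4 * (1 - w)) * K - 24 * (4 * (1 - w)) * X ^ 2) / D ^ 3))
      + 2 * (Ev * (4 * (4 * (1 + w)) * X / D ^ 2) * (Ev⁻¹ * (4 * (4 * (1 - w)) * X / D ^ 2)))
          * (Ev * (1 - 4 * (1 + w) / D))
      + 3 / 2 * (Ev * (1 - 4 * (1 + w) / D) * (Ev⁻¹ * (1 - 4 * (1 - w) / D)) - 1) ^ 2
          * (Ev * (1 - 4 * (1 + w) / D)) = 0 := by
  have hcan : ∀ a b : ℂ, Ev * a * (Ev⁻¹ * b) = a * b := by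
    intro a b
    field_simp
  have comb : ∀ a b : ℂ, Ev * (a / D ^ 5) + Ev * (b / D ^ 5) = Ev * ((a + b) / D ^ 5) := by
    intro a b; ring
  have h2 : 3 * (Ev * (4 * (4 * (1 + w)) * X / D ^ 2)) ^ 2 * (Ev⁻¹ * (1 - 4 * (1 - w) / D))
      = Ev * ((3 * (4 * (4 * (1 + w)) * X) ^ 2 * (D - 4 * (1 - w))) / D ^ 5) := by
    field_simp
  have h3 : (4 * (Ev * (1 - 4 * (1 + w) / D) * (Ev⁻¹ * (1 - 4 * (1 - w) / D))) - 3)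
          * (Ev * ((4 * (4 * (1 + w)) * K - 24 * (4 * (1 + w)) * X ^ 2) / D ^ 3))
      = Ev * (((4 * (D - 4 * (1 + w)) * (D - 4 * (1 - w)) - 3 * D ^ 2)
          * (4 * (4 * (1 + w)) * K - 24 * (4 * (1 + w)) * X ^ 2)) / D ^ 5) := by
    field_simp
  have h4 : (Ev * (1 - 4 * (1 + w) / D)) ^ 2
          * (Ev⁻¹ * ((4 * (4 * (1 - w)) * K - 24 * (4 * (1 - w)) * X ^ 2) / D ^ 3))
      = Ev * (((D - 4 * (1 + w)) ^ 2
          * (4 * (4 * (1 - w)) * K - 24 * (4 * (1 - w)) * X ^ 2)) / D ^ 5) := by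
    field_simp
  have h5 : 2 * (Ev * (4 * (4 * (1 + w)) * X / D ^ 2)
          * (Ev⁻¹ * (4 * (4 * (1 - w)) * X / D ^ 2))) * (Ev * (1 - 4 * (1 + w) / D))
      = Ev * ((2 * (4 * (4 * (1 + w)) * X) * (4 * (4 * (1 - w)) * X)
          * (D - 4 * (1 + w))) / D ^ 5) := by
    rw [hcan]
    field_simp
  have h6 : 3 / 2 * (Ev * (1 - 4 * (1 + w) / D) * (Ev⁻¹ * (1 - 4 * (1 - w) / D)) - 1) ^ 2
          * (Ev * (1 - 4 * (1 + w) / D))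
      = Ev * ((3 / 2 * ((D - 4 * (1 + w)) * (D - 4 * (1 - w)) - D ^ 2) ^ 2
          * (D - 4 * (1 + w))) / D ^ 5) := by
    rw [hcan]
    field_simp
  rw [h2, h3, h4, h5, h6, comb, comb, comb, comb, comb]
  apply mul_eq_zero_of_right
  rw [div_eq_zero_iff]
  left
  rw [hDdef, hK]
  ring

lemma abssq (z : ℂ) : ((‖z‖ : ℝ) : ℂ) ^ 2 = z * (starRingEnd ℂ) z := by
  rw [← Complex.ofReal_pow, Complex.sq_norm, Complex.mul_conj]

end Stmt2Aux

set_option maxHeartbeats 4000000 in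
open Stmt2Aux in
/-- The Peregrine breather satisfies the fourth-order elliptic equation
`B_{xxxx} + 3 B_x² B̄ + (4|B|²-3) B_{xx} + B² B̄_{xx} + 2|B_x|² B + (3/2)(|B|²-1)² B = 0`. -/
theorem stmt_2 :
    ∀ t x : ℝ,
      iteratedDeriv 4 (fun y : ℝ => BP t y) x
        + 3 * (iteratedDeriv 1 (fun y : ℝ => BP t y) x) ^ 2 * (starRingEnd ℂ) (BP t x)
        + (4 * (↑(‖BP t x‖) : ℂ) ^ 2 - 3) * iteratedDeriv 2 (fun y : ℝ => BP t y) x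
        + (BP t x) ^ 2 * (starRingEnd ℂ) (iteratedDeriv 2 (fun y : ℝ => BP t y) x)
        + 2 * (↑(‖iteratedDeriv 1 (fun y : ℝ => BP t y) x‖) : ℂ) ^ 2 * BP t x
        + (3 / 2) * ((↑(‖BP t x‖) : ℂ) ^ 2 - 1) ^ 2 * BP t x = 0 := by
  intro t x
  have hE : Ee t ≠ 0 := Ee_ne t
  simp only [iter_one t, iter_two t, iter_four t, abssq]
  rw [conj_G2, conj_G1, BP_eq, conj_G0]
  have hkk : kk t = 1 - (2 * Complex.I * (t : ℂ)) ^ 2 := by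
    unfold kk
    linear_combination (4 * (t : ℂ) ^ 2) * Complex.I_sq
  have hD' : (1 : ℂ) - (2 * Complex.I * (t : ℂ)) ^ 2 + 2 * (x : ℂ) ^ 2 ≠ 0 :=
    hkk ▸ den_ne t x
  unfold G0 G1 G2 G4 cc dd
  rw [hkk]
  set w := 2 * Complex.I * (t : ℂ) with hwdef
  set X := (x : ℂ) with hXdef
  set Ev := Ee t with hEdef
  exact key Ev w X (1 - w ^ 2) (1 - w ^ 2 + 2 * X ^ 2) hE hD' rfl rfl
end

section
/- The mass M_P[B_P(t,·)] = ∫_ℝ (|B_P(t,x)|² − 1) dx equals 0 for every t ∈ ℝ. -/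
open Complex MeasureTheory
open Filter Topology

/-- The mass `M_P[B_P(t,·)] = ∫ (|B_P|² - 1) dx` vanishes for every time. -/
theorem stmt_5 :
    ∀ t : ℝ, (∫ x : ℝ, (‖BP t x‖ ^ 2 - 1)) = 0 := by
  intro t
  set a : ℝ := 1 + 4*t^2 with ha
  have ha1 : (1:ℝ) ≤ a := by simp [ha]; positivity
  have hpt : ∀ x : ℝ, ‖BP t x‖ ^ 2 - 1 = 8 * (a - 2*x^2) / (a + 2*x^2)^2 := by
    intro x
    have hd : (0:ℝ) < 1 + 4*t^2 + 2*x^2 := by positivity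
    have hne : ((1 + 4*t^2 + 2*x^2 : ℝ) : ℂ) ≠ 0 := by exact_mod_cast hd.ne'
    have h1 : BP t x = Complex.exp (Complex.I * (t : ℂ)) *
        ((((1 + 4*t^2 + 2*x^2 - 4 : ℝ) : ℂ) + ((-8*t : ℝ):ℂ) * Complex.I) /
          ((1 + 4*t^2 + 2*x^2 : ℝ) : ℂ)) := by
      rw [BP, show (1 + 4 * (t : ℂ) ^ 2 + 2 * (x : ℂ) ^ 2) = ((1 + 4*t^2 + 2*x^2 : ℝ) : ℂ) by
        push_cast; ring]
      congr 1
      rw [eq_div_iff hne, sub_mul, div_mul_cancel₀ _ hne]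
      push_cast; ring
    have he : Complex.normSq (Complex.exp (Complex.I * (t:ℂ))) = 1 := by
      rw [Complex.normSq_eq_norm_sq, Complex.norm_exp]; simp
    rw [← Complex.normSq_eq_norm_sq, h1, Complex.normSq_mul, Complex.normSq_div,
      Complex.normSq_add_mul_I, he, one_mul, Complex.normSq_ofReal, ha]
    have h3 : (1 + 4*t^2 + 2*x^2) ≠ 0 := hd.ne'
    field_simp
    ring
  -- derivative
  have hden : ∀ x : ℝ, (0:ℝ) < a + 2*x^2 := fun x => by positivity
  have hderiv : ∀ x : ℝ, HasDerivAt (fun y : ℝ => 8*y/(a+2*y^2))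
      (8 * (a - 2*x^2) / (a + 2*x^2)^2) x := by
    intro x
    have h1 : HasDerivAt (fun y : ℝ => 8*y) 8 x := by
      simpa using (hasDerivAt_id x).const_mul 8
    have h2 : HasDerivAt (fun y : ℝ => a + 2*y^2) (4*x) x := by
      have h := ((hasDerivAt_pow 2 x).const_mul 2).const_add a
      refine h.congr_deriv ?_
      push_cast
      ring
    have := h1.div h2 (hden x).ne'
    refine this.congr_deriv ?_
    field_simp
    ring
  -- integrability
  have hint : Integrable (fun x : ℝ => 8 * (a - 2*x^2) / (a + 2*x^2)^2) := by
    have hmaj : Integrable (fun x : ℝ => 8 * (1 + x^2)⁻¹) :=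
      integrable_inv_one_add_sq.const_mul 8
    refine hmaj.mono ?_ ?_
    · apply Continuous.aestronglyMeasurable
      exact (continuous_const.mul (continuous_const.sub
        (continuous_const.mul (continuous_pow 2)))).div
        ((continuous_const.add (continuous_const.mul (continuous_pow 2))).pow 2)
        (fun x => (pow_ne_zero 2 (hden x).ne'))
    · filter_upwards with x
      have h1 : (0:ℝ) < 1 + x^2 := by positivity
      rw [norm_div, Real.norm_eq_abs, Real.norm_eq_abs, Real.norm_eq_abs]
      rw [abs_of_pos (pow_pos (hden x) 2), abs_of_pos (by positivity : (0:ℝ) < 8 * (1+x^2)⁻¹)]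
      have hb : |8 * (a - 2*x^2)| ≤ 8 * (a + 2*x^2) := by
        rw [abs_mul, abs_of_pos (by norm_num : (0:ℝ) < 8)]
        have : |a - 2*x^2| ≤ a + 2*x^2 := by
          rw [abs_le]; constructor <;> nlinarith [sq_nonneg x]
        nlinarith
      rw [div_le_iff₀ (pow_pos (hden x) 2)]
      have hsq : (1+x^2) * (a+2*x^2) ≤ (a+2*x^2)^2 := by nlinarith [sq_nonneg x]
      calc |8 * (a - 2*x^2)| ≤ 8 * (a + 2*x^2) := hb
        _ = 8 * (1+x^2)⁻¹ * ((1+x^2) * (a + 2*x^2)) := by field_simp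
        _ ≤ 8 * (1+x^2)⁻¹ * (a + 2*x^2)^2 := by
            exact mul_le_mul_of_nonneg_left hsq (by positivity)
  -- limits of F(x) = 8x/(a+2x^2) at ±∞
  have htop : Tendsto (fun x : ℝ => 8*x/(a+2*x^2)) atTop (𝓝 0) := by
    have hx : Tendsto (fun x : ℝ => a * x⁻¹ + 2*x) atTop atTop :=
      Filter.Tendsto.add_atTop (tendsto_inv_atTop_zero.const_mul a)
        (tendsto_id.const_mul_atTop (by norm_num : (0:ℝ) < 2))
    have h0 : Tendsto (fun x : ℝ => 8 / (a * x⁻¹ + 2*x)) atTop (𝓝 0) :=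
      Filter.Tendsto.div_atTop tendsto_const_nhds hx
    refine Filter.Tendsto.congr' ?_ h0
    filter_upwards [eventually_gt_atTop (0:ℝ)] with x hx0
    have h0a : (0:ℝ) < a := lt_of_lt_of_le one_pos ha1
    have hne2 : a * x⁻¹ + 2*x ≠ 0 :=
      (add_pos (mul_pos h0a (inv_pos.mpr hx0)) (by linarith)).ne'
    rw [div_eq_div_iff hne2 (hden x).ne']
    field_simp
  have hbot : Tendsto (fun x : ℝ => 8*x/(a+2*x^2)) atBot (𝓝 0) := by
    have h1 : Tendsto (fun x : ℝ => 8*(-x)/(a+2*(-x)^2)) atBot (𝓝 0) :=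
      htop.comp tendsto_neg_atBot_atTop
    have h2 := h1.neg
    rw [neg_zero] at h2
    refine h2.congr fun x => ?_
    rw [neg_sq, ← neg_div]
    ring_nf
  calc (∫ x : ℝ, (‖BP t x‖ ^ 2 - 1))
      = ∫ x : ℝ, 8 * (a - 2*x^2) / (a + 2*x^2)^2 :=
        integral_congr_ae (Filter.Eventually.of_forall hpt)
    _ = 0 - 0 := integral_of_hasDerivAt_of_tendsto hderiv hint hbot htop
    _ = 0 := by ring
end

section
/- The energy E_P[B_P(t,·)] = ∫_ℝ |∂_x B_P(t,x)|² dx − (1/2)∫_ℝ (|B_P(t,x)|² − 1)² dx equals 0 for every t ∈ ℝ. -/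
open Complex MeasureTheory

open Polynomial Filter Topology
lemma den_pos (t x : ℝ) : (0:ℝ) < 1 + 4 * t ^ 2 + 2 * x ^ 2 := by positivity

lemma den_cast (t x : ℝ) :
    (1 + 4 * (t : ℂ) ^ 2 + 2 * (x : ℂ) ^ 2) = ((1 + 4 * t ^ 2 + 2 * x ^ 2 : ℝ) : ℂ) := by
  push_cast; ring

lemma den_ne (t x : ℝ) : (1 + 4 * (t : ℂ) ^ 2 + 2 * (x : ℂ) ^ 2) ≠ 0 := by
  rw [den_cast]
  exact_mod_cast (den_pos t x).ne'

lemma hasDerivAt_den (t x : ℝ) :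
    HasDerivAt (fun y : ℝ => 1 + 4 * (t : ℂ) ^ 2 + 2 * (y : ℂ) ^ 2) (4 * (x:ℂ)) x := by
  have h0 : HasDerivAt (fun y : ℝ => ((y : ℝ) : ℂ)) 1 x := by
    simpa using (hasDerivAt_id x).ofReal_comp
  have h2 := ((h0.mul h0).const_mul (2:ℂ)).const_add (1 + 4 * (t : ℂ) ^ 2)
  have hfun : (fun y : ℝ => 1 + 4 * (t : ℂ) ^ 2 + 2 * (y : ℂ) ^ 2)
      = fun y : ℝ => 1 + 4 * (t : ℂ) ^ 2 + 2 * (((y:ℝ):ℂ) * ((y:ℝ):ℂ)) := by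
    funext y; ring
  rw [hfun]
  refine h2.congr_deriv ?_
  ring

lemma hasDerivAt_BP (t x : ℝ) :
    HasDerivAt (fun y : ℝ => BP t y)
      (Complex.exp (Complex.I * (t : ℂ)) *
        (16 * (1 + 2 * Complex.I * (t : ℂ)) * (x : ℂ) /
          ((1 + 4 * t ^ 2 + 2 * x ^ 2 : ℝ) : ℂ) ^ 2)) x := by
  have hq := ((hasDerivAt_const x ((4:ℂ) * (1 + 2 * Complex.I * (t:ℂ)))).div
    (hasDerivAt_den t x) (den_ne t x))
  have H := (hq.const_sub 1).const_mul (Complex.exp (Complex.I * (t : ℂ)))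
  have hfun : (fun y : ℝ => BP t y)
      = fun y : ℝ => Complex.exp (Complex.I * (t : ℂ)) *
          (1 - (4:ℂ) * (1 + 2 * Complex.I * (t:ℂ)) / (1 + 4 * (t : ℂ) ^ 2 + 2 * (y : ℂ) ^ 2)) := by
    funext y; simp [BP]
  rw [hfun]
  refine H.congr_deriv ?_
  rw [← den_cast]
  field_simp
  ring

lemma abs_deriv_BP (t x : ℝ) :
    ‖deriv (fun y : ℝ => BP t y) x‖ ^ 2
      = 256 * (1 + 4 * t ^ 2) * x ^ 2 / (1 + 4 * t ^ 2 + 2 * x ^ 2) ^ 4 := by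
  rw [(hasDerivAt_BP t x).deriv]
  rw [norm_mul, norm_div, norm_pow, norm_mul, norm_mul, Complex.norm_real, Real.norm_eq_abs, Complex.norm_exp]
  have h1 : ‖(1 + 2 * Complex.I * (t:ℂ))‖ ^ 2 = 1 + 4 * t ^ 2 := by
    rw [Complex.sq_norm, Complex.normSq_apply]
    simp
    ring
  have h2 : ‖((16:ℂ))‖ = 16 := by
    norm_num [Complex.norm_ofNat]
  rw [h2, Complex.norm_real, Real.norm_eq_abs]
  have hre : (Complex.I * (t:ℂ)).re = 0 := by simp
  rw [hre, Real.exp_zero, one_mul]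
  rw [div_pow, mul_pow, mul_pow, ← pow_mul, h1, _root_.sq_abs, abs_of_pos (den_pos t x)]
  norm_num

lemma abs_BP_sq (t x : ℝ) :
    ‖BP t x‖ ^ 2 - 1
      = (8 + 32 * t ^ 2 - 16 * x ^ 2) / (1 + 4 * t ^ 2 + 2 * x ^ 2) ^ 2 := by
  have hne := den_ne t x
  have hz : (1:ℂ) - 4 * (1 + 2 * Complex.I * (t:ℂ)) / (1 + 4 * (t : ℂ) ^ 2 + 2 * (x : ℂ) ^ 2)
      = (((1 + 4 * t ^ 2 + 2 * x ^ 2 - 4 : ℝ) : ℂ) - 8 * (t:ℝ) * Complex.I)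
          / ((1 + 4 * t ^ 2 + 2 * x ^ 2 : ℝ) : ℂ) := by
    rw [← den_cast]
    field_simp
    push_cast
    ring
  rw [BP, norm_mul, Complex.norm_exp, hz, norm_div, Complex.norm_real, Real.norm_eq_abs]
  have hre : (Complex.I * (t:ℂ)).re = 0 := by simp
  rw [hre, Real.exp_zero, one_mul, div_pow, Complex.sq_norm, Complex.normSq_apply]
  have hden2 : |1 + 4 * t ^ 2 + 2 * x ^ 2| = 1 + 4 * t ^ 2 + 2 * x ^ 2 :=
    abs_of_pos (den_pos t x)
  rw [hden2]
  have hpos := den_pos t x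
  have h1 : ((((1 + 4 * t ^ 2 + 2 * x ^ 2 - 4 : ℝ) : ℂ) - 8 * (t:ℝ) * Complex.I)).re
      = 1 + 4 * t ^ 2 + 2 * x ^ 2 - 4 := by simp [← Complex.ofReal_pow]
  have h2 : ((((1 + 4 * t ^ 2 + 2 * x ^ 2 - 4 : ℝ) : ℂ) - 8 * (t:ℝ) * Complex.I)).im
      = -(8 * t) := by simp [← Complex.ofReal_pow]
  rw [h1, h2]
  field_simp
  ring

noncomputable def Gfun (t : ℝ) : ℝ → ℝ := fun x =>
  (64 / 3 * x ^ 3 - 32 * (1 + 4 * t ^ 2) * x) / (1 + 4 * t ^ 2 + 2 * x ^ 2) ^ 3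

lemma hasDerivAt_G (t x : ℝ) :
    HasDerivAt (Gfun t)
      (256 * (1 + 4 * t ^ 2) * x ^ 2 / (1 + 4 * t ^ 2 + 2 * x ^ 2) ^ 4
        - 1 / 2 * ((8 + 32 * t ^ 2 - 16 * x ^ 2) / (1 + 4 * t ^ 2 + 2 * x ^ 2) ^ 2) ^ 2) x := by
  have hrpos : (0:ℝ) < 1 + 4 * t ^ 2 + 2 * x ^ 2 := den_pos t x
  have hinner : HasDerivAt (fun x : ℝ => 1 + 4 * t ^ 2 + 2 * x ^ 2) (4 * x) x := by
    have := ((hasDerivAt_pow 2 x).const_mul (2:ℝ)).const_add (1 + 4 * t ^ 2)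
    refine this.congr_deriv ?_
    push_cast; ring
  have hden := hinner.pow 3
  have hnum : HasDerivAt (fun x : ℝ => 64 / 3 * x ^ 3 - 32 * (1 + 4 * t ^ 2) * x)
      (64 / 3 * ((3:ℕ) * x ^ 2) - 32 * (1 + 4 * t ^ 2)) x := by
    have h3 := (hasDerivAt_pow 3 x).const_mul (64 / 3 : ℝ)
    have hl := (hasDerivAt_id x).const_mul (32 * (1 + 4 * t ^ 2) : ℝ)
    have := h3.sub hl
    refine this.congr_deriv ?_
    push_cast; ring
  have hq := hnum.div hden (pow_ne_zero 3 hrpos.ne')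
  refine hq.congr_deriv ?_
  have hne : (1 + 4 * t ^ 2 + 2 * x ^ 2 : ℝ) ≠ 0 := hrpos.ne'
  simp only [Pi.pow_apply]
  push_cast
  field_simp
  ring

lemma integrable_F1 (t : ℝ) :
    Integrable (fun x : ℝ => 256 * (1 + 4 * t ^ 2) * x ^ 2 / (1 + 4 * t ^ 2 + 2 * x ^ 2) ^ 4) := by
  have hA : (0:ℝ) ≤ 1 + 4 * t ^ 2 := by positivity
  apply Integrable.mono' (integrable_inv_one_add_sq.const_mul (128 * (1 + 4 * t ^ 2)))
  · exact (Continuous.div (by continuity) (by continuity)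
      (fun x => by positivity)).aestronglyMeasurable
  · filter_upwards with x
    rw [Real.norm_eq_abs, _root_.abs_of_nonneg (by positivity), ← div_eq_mul_inv,
      div_le_div_iff₀ (by positivity) (by positivity)]
    have h1 : (1:ℝ) + x ^ 2 ≤ 1 + 4 * t ^ 2 + 2 * x ^ 2 := by nlinarith
    have h2 : 2 * x ^ 2 ≤ 1 + 4 * t ^ 2 + 2 * x ^ 2 := by nlinarith
    have h3 : (1:ℝ) ≤ 1 + 4 * t ^ 2 + 2 * x ^ 2 := by nlinarith
    have h4 : (2 * x ^ 2) * (1 + x ^ 2)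
        ≤ (1 + 4 * t ^ 2 + 2 * x ^ 2) * (1 + 4 * t ^ 2 + 2 * x ^ 2) :=
      mul_le_mul h2 h1 (by positivity) (by positivity)
    have h5 : (1 + 4 * t ^ 2 + 2 * x ^ 2) ^ 2 ≤ (1 + 4 * t ^ 2 + 2 * x ^ 2) ^ 4 :=
      pow_le_pow_right₀ h3 (by norm_num)
    nlinarith [mul_le_mul_of_nonneg_left h4 hA, mul_le_mul_of_nonneg_left h5 hA]

lemma integrable_F2 (t : ℝ) :
    Integrable (fun x : ℝ =>
      ((8 + 32 * t ^ 2 - 16 * x ^ 2) / (1 + 4 * t ^ 2 + 2 * x ^ 2) ^ 2) ^ 2) := by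
  apply Integrable.mono' (integrable_inv_one_add_sq.const_mul 256)
  · have hc : Continuous (fun x : ℝ =>
        (8 + 32 * t ^ 2 - 16 * x ^ 2) / (1 + 4 * t ^ 2 + 2 * x ^ 2) ^ 2) :=
      Continuous.div (by continuity) (by continuity) (fun x => by positivity)
    exact (hc.pow 2).aestronglyMeasurable
  · filter_upwards with x
    rw [div_pow, Real.norm_eq_abs, _root_.abs_of_nonneg (by positivity), ← div_eq_mul_inv,
      div_le_div_iff₀ (by positivity) (by positivity)]
    have h1 : (1:ℝ) + x ^ 2 ≤ 1 + 4 * t ^ 2 + 2 * x ^ 2 := by nlinarith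
    have h3 : (1:ℝ) ≤ 1 + 4 * t ^ 2 + 2 * x ^ 2 := by nlinarith
    have hb : (8 + 32 * t ^ 2 - 16 * x ^ 2) ^ 2 ≤ 256 * (1 + 4 * t ^ 2 + 2 * x ^ 2) ^ 2 := by
      nlinarith [sq_nonneg t, sq_nonneg x, sq_nonneg (t * x), sq_nonneg (t ^ 2), sq_nonneg (x ^ 2)]
    have h5 : ((1 + 4 * t ^ 2 + 2 * x ^ 2) ^ 2) ^ 2 ≤ ((1 + 4 * t ^ 2 + 2 * x ^ 2) ^ 2) ^ 2
        * (1 + 4 * t ^ 2 + 2 * x ^ 2) := by nlinarith [sq_nonneg ((1 + 4 * t ^ 2 + 2 * x ^ 2) ^ 2)]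
    have h6 := mul_le_mul hb h1 (by positivity) (by positivity)
    nlinarith [h6, mul_le_mul_of_nonneg_left h3 (by positivity : (0:ℝ) ≤ 256 * (1 + 4 * t ^ 2 + 2 * x ^ 2) ^ 2 * (1 + 4 * t ^ 2 + 2 * x ^ 2))]

lemma tendsto_G_top (t : ℝ) : Tendsto (Gfun t) atTop (𝓝 0) := by
  have hdeg : (C (64/3 : ℝ) * X ^ 3 - C (32 * (1 + 4 * t ^ 2)) * X).degree
      < ((C (1 + 4 * t ^ 2 : ℝ) + C 2 * X ^ 2) ^ 3).degree := by
    have hQ : ((C (1 + 4 * t ^ 2 : ℝ) + C 2 * X ^ 2) ^ 3).degree = 6 := by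
      compute_degree!
    have hP : (C (64/3 : ℝ) * X ^ 3 - C (32 * (1 + 4 * t ^ 2)) * X).degree ≤ 3 := by
      compute_degree
    rw [hQ]
    exact lt_of_le_of_lt hP (by norm_num)
  have h := Polynomial.div_tendsto_zero_of_degree_lt _ _ hdeg
  have heq : (fun x : ℝ => eval x (C (64/3 : ℝ) * X ^ 3 - C (32 * (1 + 4 * t ^ 2)) * X)
      / eval x ((C (1 + 4 * t ^ 2 : ℝ) + C 2 * X ^ 2) ^ 3)) = Gfun t := by
    funext x
    simp [Gfun, eval_pow, eval_mul, eval_add, eval_sub, eval_C, eval_X]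
  rwa [heq] at h

lemma tendsto_G_bot (t : ℝ) : Tendsto (Gfun t) atBot (𝓝 0) := by
  have hodd : ∀ x : ℝ, Gfun t (-x) = - Gfun t x := by
    intro x; simp only [Gfun]; ring
  have h2 : Tendsto (fun x : ℝ => Gfun t (-x)) atBot (𝓝 0) :=
    (tendsto_G_top t).comp tendsto_neg_atBot_atTop
  simp only [hodd] at h2
  simpa using h2.neg

/-- The energy `E_P[B_P(t,·)] = ∫ |∂ₓB_P|² - (1/2)∫ (|B_P|²-1)²` vanishes for every time. -/
theorem stmt_6 :
    ∀ t : ℝ,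
      (∫ x : ℝ, ‖deriv (fun y : ℝ => BP t y) x‖ ^ 2)
        - (1 / 2) * ∫ x : ℝ, (‖BP t x‖ ^ 2 - 1) ^ 2 = 0 := by
  intro t
  have h1 : (fun x : ℝ => ‖deriv (fun y : ℝ => BP t y) x‖ ^ 2)
      = fun x : ℝ => 256 * (1 + 4 * t ^ 2) * x ^ 2 / (1 + 4 * t ^ 2 + 2 * x ^ 2) ^ 4 :=
    funext (abs_deriv_BP t)
  have h2 : (fun x : ℝ => (‖BP t x‖ ^ 2 - 1) ^ 2)
      = fun x : ℝ => ((8 + 32 * t ^ 2 - 16 * x ^ 2) / (1 + 4 * t ^ 2 + 2 * x ^ 2) ^ 2) ^ 2 := by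
    funext x; rw [abs_BP_sq]
  rw [h1, h2]
  have hint1 := integrable_F1 t
  have hint2 := (integrable_F2 t).const_mul (1/2 : ℝ)
  have key : ∫ x : ℝ, (256 * (1 + 4 * t ^ 2) * x ^ 2 / (1 + 4 * t ^ 2 + 2 * x ^ 2) ^ 4
      - 1 / 2 * ((8 + 32 * t ^ 2 - 16 * x ^ 2) / (1 + 4 * t ^ 2 + 2 * x ^ 2) ^ 2) ^ 2)
      = 0 - 0 :=
    integral_of_hasDerivAt_of_tendsto (fun x => hasDerivAt_G t x)
      (hint1.sub hint2) (tendsto_G_bot t) (tendsto_G_top t)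
  rw [← integral_const_mul, ← integral_sub hint1 hint2]
  simpa using key
end
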